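/- For every pair of integers m ≥ 1 and d ≥ 1 there exists a finite set Π of homogeneous polynomials of degree 1 in the variables X₁,…,X_d with integer coefficients such that the family of m-th powers {P^m : P ∈ Π} is a basis of the real vector space of homogeneous polynomials of degree m in d variables. -/

import Mathlib

open Finset

lemma polarization {R : Type*} [CommRing R] (n : ℕ) (x : Fin n → R) :
    ∑ S : Finset (Fin n), (-1 : R) ^ (Sᶜ.card) * (∑ i ∈ S, x i) ^ n
      = (n.factorial : R) * ∏ i, x i := by
  classical
  have h1 : ∀ S : Finset (Fin n), (∑ i ∈ S, x i) ^ n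
      = ∑ f : Fin n → Fin n, if (∀ k, f k ∈ S) then ∏ k, x (f k) else 0 := by
    intro S
    have : (∑ i ∈ S, x i) ^ n = ∏ _k : Fin n, ∑ i ∈ S, x i := by
      rw [prod_const, card_univ, Fintype.card_fin]
    rw [this, prod_univ_sum]
    have hfil : Fintype.piFinset (fun _ : Fin n => S) =
        univ.filter (fun f : Fin n → Fin n => ∀ k, f k ∈ S) := by
      ext f; simp [Fintype.mem_piFinset]
    rw [hfil, sum_filter]
  simp_rw [h1, mul_sum]
  rw [sum_comm]
  have h2 : ∀ f : Fin n → Fin n,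
      (∑ S : Finset (Fin n), (-1 : R) ^ (Sᶜ.card) * if (∀ k, f k ∈ S) then ∏ k, x (f k) else 0)
      = if Function.Bijective f then ∏ k, x (f k) else 0 := by
    intro f
    have key : ∀ S : Finset (Fin n),
        (-1 : R) ^ (Sᶜ.card) * (if (∀ k, f k ∈ S) then ∏ k, x (f k) else 0)
        = (if Sᶜ ⊆ (Finset.image f univ)ᶜ then (-1 : R) ^ (Sᶜ.card) else 0) * ∏ k, x (f k) := by
      intro S
      have : (∀ k, f k ∈ S) ↔ Sᶜ ⊆ (Finset.image f univ)ᶜ := by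
        rw [compl_subset_compl]
        constructor
        · intro h i hi
          simp only [mem_image, mem_univ, true_and] at hi
          obtain ⟨k, rfl⟩ := hi; exact h k
        · intro h k; exact h (mem_image_of_mem f (mem_univ k))
      split_ifs with h h' h' <;> simp_all <;> ring
    simp_rw [key]
    rw [← sum_mul]
    have e : ∑ S : Finset (Fin n), (if Sᶜ ⊆ (Finset.image f univ)ᶜ then (-1 : R) ^ (Sᶜ.card) else 0)
        = ∑ T : Finset (Fin n), (if T ⊆ (Finset.image f univ)ᶜ then (-1 : R) ^ (T.card) else 0) := by
      apply Fintype.sum_equiv ⟨compl, compl, compl_compl, compl_compl⟩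
      intro S; rfl
    rw [e]
    have e2 : ∑ T : Finset (Fin n), (if T ⊆ (Finset.image f univ)ᶜ then (-1 : R) ^ (T.card) else 0)
        = ∑ T ∈ ((Finset.image f univ)ᶜ).powerset, (-1 : R) ^ (T.card) := by
      rw [← sum_filter]
      congr 1
      ext T; simp
    rw [e2]
    have e3 : ∑ T ∈ ((Finset.image f univ)ᶜ).powerset, ((-1 : R)) ^ (T.card)
        = if (Finset.image f univ)ᶜ = ∅ then 1 else 0 := by
      have h := Finset.sum_powerset_neg_one_pow_card (x := (Finset.image f univ)ᶜ)
      have h2 : ((∑ T ∈ ((Finset.image f univ)ᶜ).powerset, ((-1 : ℤ)) ^ (T.card) : ℤ) : R)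
          = ((if (Finset.image f univ)ᶜ = ∅ then 1 else 0 : ℤ) : R) := by rw [h]
      push_cast at h2
      simpa using h2
    rw [e3]
    have e4 : ((Finset.image f univ)ᶜ = ∅) ↔ Function.Bijective f := by
      rw [compl_eq_empty_iff]
      constructor
      · intro h
        have hs : Function.Surjective f := by
          intro b
          have hb : b ∈ Finset.image f univ := by rw [h]; exact mem_univ b
          simpa using hb
        exact ⟨Finite.injective_iff_surjective.mpr hs, hs⟩
      · intro h
        ext b; simpa using h.2 b
    simp only [e4]
    split_ifs <;> simp
  simp_rw [h2]
  rw [← Finset.sum_filter]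
  have : ∑ f ∈ univ.filter (fun f : Fin n → Fin n => Function.Bijective f), ∏ k, x (f k)
      = ∑ σ : Equiv.Perm (Fin n), ∏ k, x (σ k) := by
    apply Finset.sum_nbij' (fun f => if h : Function.Bijective f then Equiv.ofBijective f h else Equiv.refl _)
      (fun σ => ⇑σ)
    · intro f hf; exact mem_univ _
    · intro σ _
      simp only [mem_filter]
      exact ⟨mem_univ _, σ.bijective⟩
    · intro f hf
      simp only [mem_filter] at hf
      rw [dif_pos hf.2]; rfl
    · intro σ _
      rw [dif_pos σ.bijective]; ext x; rfl
    · intro f hf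
      simp only [mem_filter] at hf
      rw [dif_pos hf.2]; rfl
  rw [this]
  have : ∀ σ : Equiv.Perm (Fin n), ∏ k, x (σ k) = ∏ k, x k := fun σ => Equiv.prod_comp σ x
  simp_rw [this]
  rw [Finset.sum_const, card_univ, Fintype.card_perm, Fintype.card_fin, nsmul_eq_mul]

open MvPolynomial

noncomputable def Lf (m d : ℕ) (c : Fin d → Fin (m + 1)) : MvPolynomial (Fin d) ℝ :=
  ∑ i, (c i : ℕ) • MvPolynomial.X i

lemma Lf_isHomogeneous (m d : ℕ) (c : Fin d → Fin (m + 1)) :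
    (Lf m d c).IsHomogeneous 1 := by
  rw [← mem_homogeneousSubmodule]
  apply Submodule.sum_mem
  intro i _
  have hX : (MvPolynomial.X i : MvPolynomial (Fin d) ℝ) ∈ homogeneousSubmodule (Fin d) ℝ 1 := by
    rw [mem_homogeneousSubmodule]; exact isHomogeneous_X ℝ i
  exact Submodule.smul_of_tower_mem _ _ hX

lemma Lf_int (m d : ℕ) (c : Fin d → Fin (m + 1)) :
    ∃ Q : MvPolynomial (Fin d) ℤ, Lf m d c = MvPolynomial.map (Int.castRingHom ℝ) Q := by
  refine ⟨∑ i, (c i : ℕ) • MvPolynomial.X i, ?_⟩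
  rw [map_sum]
  apply Finset.sum_congr rfl
  intro i _
  rw [map_nsmul, MvPolynomial.map_X]

lemma Lf_eval (m d : ℕ) (c : Fin d → Fin (m + 1)) (j : Fin d) :
    MvPolynomial.eval (Pi.single j (1 : ℝ)) (Lf m d c) = (c j : ℕ) := by
  rw [Lf, map_sum]
  rw [Finset.sum_eq_single j]
  · simp
  · intro i _ hij
    simp [Pi.single_apply, hij]
  · simp

lemma Lf_inj (m d : ℕ) (hm : 1 ≤ m) (c c' : Fin d → Fin (m + 1))
    (h : Lf m d c ^ m = Lf m d c' ^ m) : c = c' := by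
  funext j
  have := congrArg (MvPolynomial.eval (Pi.single j (1 : ℝ))) h
  rw [map_pow, map_pow, Lf_eval, Lf_eval] at this
  have : (((c j : ℕ) ^ m : ℕ) : ℝ) = (((c' j : ℕ) ^ m : ℕ) : ℝ) := by push_cast; exact this
  have := Nat.cast_injective this
  have := Nat.pow_left_injective (by omega : m ≠ 0) this
  exact Fin.ext this

lemma monomial_mem (m d : ℕ) (hm : 1 ≤ m) (α : Fin d →₀ ℕ) (hα : (α.sum fun _ e => e) = m) :
    MvPolynomial.monomial α (1 : ℝ) ∈
      Submodule.span ℝ (Set.range fun c : Fin d → Fin (m + 1) => Lf m d c ^ m) := by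
  classical
  set l : List (Fin d) := α.toMultiset.toList with hldef
  have hl : l.length = m := by
    rw [hldef, Multiset.length_toList, Finsupp.card_toMultiset]
    exact hα
  have hprod : ∏ k : Fin l.length, MvPolynomial.X (l.get k) = monomial α (1 : ℝ) := by
    rw [← List.prod_ofFn]
    have h1 : List.ofFn (fun k => (MvPolynomial.X (l.get k) : MvPolynomial (Fin d) ℝ))
        = l.map MvPolynomial.X := by
      conv_rhs => rw [← List.ofFn_get l, List.map_ofFn]
      rfl
    rw [h1]
    have h2 : (l.map (MvPolynomial.X : Fin d → MvPolynomial (Fin d) ℝ)).prod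
        = ((α.toMultiset.map (MvPolynomial.X : Fin d → MvPolynomial (Fin d) ℝ))).prod := by
      have : (α.toMultiset.map (MvPolynomial.X : Fin d → MvPolynomial (Fin d) ℝ))
          = ((l.map (MvPolynomial.X : Fin d → MvPolynomial (Fin d) ℝ) : List _) :
              Multiset (MvPolynomial (Fin d) ℝ)) := by
        conv_lhs => rw [← Multiset.coe_toList α.toMultiset]
        rw [Multiset.map_coe]
      rw [this, Multiset.prod_coe]
    rw [h2, Finsupp.toMultiset_map, Finsupp.prod_toMultiset,
      Finsupp.prod_mapDomain_index_inj (MvPolynomial.X_injective), monomial_eq, C_1, one_mul]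
  have key := polarization l.length (fun k => (MvPolynomial.X (l.get k) : MvPolynomial (Fin d) ℝ))
  rw [hprod] at key
  have hspan : (l.length.factorial : MvPolynomial (Fin d) ℝ) * monomial α 1 ∈
      Submodule.span ℝ (Set.range fun c : Fin d → Fin (m + 1) => Lf m d c ^ m) := by
    rw [← key]
    apply Submodule.sum_mem
    intro S _
    have hcard : ∀ i : Fin d, (S.filter fun k => l.get k = i).card < m + 1 := by
      intro i
      have : (S.filter fun k => l.get k = i).card ≤ S.card := Finset.card_filter_le _ _
      have h2 : S.card ≤ l.length := by
        simpa using Finset.card_le_card (Finset.subset_univ S)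
      omega
    set c : Fin d → Fin (m + 1) := fun i => ⟨_, hcard i⟩ with hc
    have hLc : (∑ k ∈ S, MvPolynomial.X (l.get k) : MvPolynomial (Fin d) ℝ) = Lf m d c := by
      rw [Finset.sum_comp]
      rw [Lf]
      apply Finset.sum_subset (Finset.subset_univ _)
      intro i _ hi
      have : (S.filter fun k => l.get k = i) = ∅ := by
        rw [Finset.filter_eq_empty_iff]
        intro k hk hik
        exact hi (Finset.mem_image.mpr ⟨k, hk, hik⟩)
      simp only [List.get_eq_getElem] at this
      simp [this]
    rw [hLc, show (Lf m d c) ^ l.length = (Lf m d c) ^ m from by rw [hl]]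
    have hrw : (-1 : MvPolynomial (Fin d) ℝ) ^ (Sᶜ.card) * (Lf m d c) ^ m
        = ((-1 : ℝ) ^ (Sᶜ.card)) • (Lf m d c) ^ m := by
      rw [MvPolynomial.smul_eq_C_mul, map_pow, map_neg, map_one]
    rw [hrw]
    exact Submodule.smul_mem _ _ (Submodule.subset_span ⟨c, rfl⟩)
  rw [hl] at hspan
  have h2 := Submodule.smul_mem _ ((m.factorial : ℝ))⁻¹ hspan
  have h3 : ((m.factorial : ℝ))⁻¹ • ((m.factorial : MvPolynomial (Fin d) ℝ) * monomial α 1)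
      = monomial α 1 := by
    rw [MvPolynomial.smul_eq_C_mul, ← mul_assoc, ← MvPolynomial.C_eq_coe_nat, ← map_mul,
      inv_mul_cancel₀ (by exact_mod_cast m.factorial_ne_zero), C_1, one_mul]
  rwa [h3] at h2

theorem stmt_0 (m d : ℕ) (hm : 1 ≤ m) (hd : 1 ≤ d) :
    ∃ Ps : Finset (MvPolynomial (Fin d) ℝ),
      (∀ P ∈ Ps, MvPolynomial.IsHomogeneous P 1 ∧
        ∃ Q : MvPolynomial (Fin d) ℤ, P = MvPolynomial.map (Int.castRingHom ℝ) Q) ∧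
      ∃ b : Module.Basis Ps ℝ (MvPolynomial.homogeneousSubmodule (Fin d) ℝ m),
        ∀ P : Ps, (b P : MvPolynomial (Fin d) ℝ) = (P : MvPolynomial (Fin d) ℝ) ^ m := by
  classical
  set V := MvPolynomial.homogeneousSubmodule (Fin d) ℝ m with hV
  set G : Set (MvPolynomial (Fin d) ℝ) :=
    Set.range (fun c : Fin d → Fin (m + 1) => Lf m d c ^ m) with hG
  have hGV : G ⊆ (V : Set (MvPolynomial (Fin d) ℝ)) := by
    rintro _ ⟨c, rfl⟩
    rw [SetLike.mem_coe, hV, mem_homogeneousSubmodule]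
    simpa using (Lf_isHomogeneous m d c).pow m
  have hle : V ≤ Submodule.span ℝ G := by
    intro p hp
    rw [hV, mem_homogeneousSubmodule] at hp
    have hrep : p = ∑ v ∈ p.support, MvPolynomial.monomial v (MvPolynomial.coeff v p) :=
      MvPolynomial.as_sum p
    rw [hrep]
    apply Submodule.sum_mem
    intro v hv
    have hdeg : (v.sum fun _ e => e) = m := by
      by_contra hne
      have hdne : v.degree ≠ m := by
        rwa [show v.degree = v.sum fun _ e => e from rfl]
      exact (MvPolynomial.mem_support_iff.mp hv) (hp.coeff_eq_zero hdne)
    have h1 := monomial_mem m d hm v hdeg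
    have h2 : MvPolynomial.monomial v (MvPolynomial.coeff v p)
        = (MvPolynomial.coeff v p) • MvPolynomial.monomial v (1 : ℝ) := by
      rw [MvPolynomial.smul_monomial, smul_eq_mul, mul_one]
    rw [h2]
    exact Submodule.smul_mem _ _ h1
  have hspanG : Submodule.span ℝ G = V := le_antisymm (Submodule.span_le.mpr hGV) hle
  have hmemV : ∀ c : Fin d → Fin (m + 1), Lf m d c ^ m ∈ V := fun c => hGV ⟨c, rfl⟩
  set v : (Fin d → Fin (m + 1)) → V := fun c => ⟨Lf m d c ^ m, hmemV c⟩ with hv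
  set s : Set V := Set.range v with hs
  have himage : V.subtype '' s = G := by
    rw [hs, ← Set.range_comp]
    rfl
  have hspans : Submodule.span ℝ s = ⊤ := by
    apply Submodule.map_injective_of_injective V.injective_subtype
    rw [Submodule.map_span, himage, hspanG, Submodule.map_top, Submodule.range_subtype]
  obtain ⟨t, hts, htspan, htli⟩ := exists_linearIndependent ℝ s
  have htspan' : Submodule.span ℝ t = ⊤ := by rw [htspan, hspans]
  have htop : ⊤ ≤ Submodule.span ℝ (Set.range ((↑) : t → V)) := by
    rw [Subtype.range_coe, htspan']
  let bt : Module.Basis t ℝ V := Module.Basis.mk htli htop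
  set Pset : Set (MvPolynomial (Fin d) ℝ) :=
    {P | ∃ c : Fin d → Fin (m + 1), P = Lf m d c ∧ v c ∈ t} with hPset
  have hPfin : Pset.Finite := by
    have hsub : Pset ⊆ Set.range (Lf m d) := by
      rintro P ⟨c, rfl, -⟩; exact ⟨c, rfl⟩
    exact (Set.finite_range _).subset hsub
  refine ⟨hPfin.toFinset, ?_, ?_⟩
  · intro P hP
    rw [Set.Finite.mem_toFinset] at hP
    obtain ⟨c, rfl, -⟩ := hP
    exact ⟨Lf_isHomogeneous m d c, Lf_int m d c⟩
  · have hmem : ∀ P : MvPolynomial (Fin d) ℝ, P ∈ hPfin.toFinset → P ^ m ∈ V := by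
      intro P hP
      rw [Set.Finite.mem_toFinset] at hP
      obtain ⟨c, rfl, -⟩ := hP
      exact hmemV c
    have hmemt : ∀ (P : MvPolynomial (Fin d) ℝ) (hP : P ∈ hPfin.toFinset),
        (⟨P ^ m, hmem P hP⟩ : V) ∈ t := by
      intro P hP
      have hP' := hP
      rw [Set.Finite.mem_toFinset] at hP'
      obtain ⟨c, rfl, hct⟩ := hP'
      have : (⟨Lf m d c ^ m, hmem _ hP⟩ : V) = v c := Subtype.ext rfl
      rw [this]
      exact hct
    have hbij : Function.Bijective
        (fun P : {P // P ∈ hPfin.toFinset} =>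
          (⟨⟨(P : MvPolynomial (Fin d) ℝ) ^ m, hmem P P.2⟩, hmemt P P.2⟩ : t)) := by
      constructor
      · intro P P' hPP'
        have heq : (P : MvPolynomial (Fin d) ℝ) ^ m = (P' : MvPolynomial (Fin d) ℝ) ^ m := by
          have := congrArg (fun x : t => ((x : V) : MvPolynomial (Fin d) ℝ)) hPP'
          exact this
        have h1 := P.2; have h2 := P'.2
        rw [Set.Finite.mem_toFinset] at h1 h2
        obtain ⟨c, hc, -⟩ := h1
        obtain ⟨c', hc', -⟩ := h2
        apply Subtype.ext
        rw [hc, hc'] at heq ⊢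
        rw [Lf_inj m d hm c c' heq]
      · intro x
        obtain ⟨c, hc⟩ := hts x.2
        have hPmem : Lf m d c ∈ hPfin.toFinset := by
          rw [Set.Finite.mem_toFinset]
          exact ⟨c, rfl, by rw [hc]; exact x.2⟩
        refine ⟨⟨Lf m d c, hPmem⟩, ?_⟩
        apply Subtype.ext
        apply Subtype.ext
        show Lf m d c ^ m = ((x : V) : MvPolynomial (Fin d) ℝ)
        rw [← hc]
    let e : {P // P ∈ hPfin.toFinset} ≃ t := Equiv.ofBijective _ hbij
    refine ⟨bt.reindex e.symm, ?_⟩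
    intro P
    rw [Module.Basis.reindex_apply, Equiv.symm_symm]
    have : bt (e P) = ((e P : t) : V) := Module.Basis.mk_apply htli htop (e P)
    rw [this]
    rfl
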